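/- Fix p > 1 and let f : ℝ → ℝ be given by a power series f(a) = Σ_{n=0}^∞ γ_n a^n, with f₊(a) := Σ_{n=0}^∞ |γ_n| a^n. On a probability space, let N be a random variable taking values in the nonnegative integers with P(N = n) = (p−1)/p^{n+1} for every n ∈ ℕ, let (X_j)_{j≥1} be i.i.d. real random variables independent of N, and suppose E[X_1²] ≤ m for some m ≥ 0 with f₊(√(p·m)) < ∞. Define θ := γ_N · (p^{N+1}/(p−1)) · ∏_{j=1}^N X_j (so θ = γ_0·p/(p−1) when N = 0). Then θ is integrable and E[θ] = f(E[X_1]). -/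

import Mathlib

open MeasureTheory ProbabilityTheory
open scoped ENNReal

lemma prod_indep_aux {Ω : Type*} [MeasurableSpace Ω] {μ : Measure Ω} [IsProbabilityMeasure μ]
    {X : ℕ → Ω → ℝ} (hXm : ∀ j, Measurable (X j))
    (hXindep : iIndepFun X μ)
    (hint : ∀ j, Integrable (X j) μ) (n : ℕ) :
    Integrable (fun ω => ∏ j ∈ Finset.range n, X j ω) μ ∧
      ∫ ω, ∏ j ∈ Finset.range n, X j ω ∂μ = ∏ j ∈ Finset.range n, ∫ ω, X j ω ∂μ := by
  induction n with
  | zero => simp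
  | succ n ih =>
    have hind := hXindep.indepFun_prod_range_succ hXm n
    have hpe : (∏ j ∈ Finset.range n, X j) = fun ω => ∏ j ∈ Finset.range n, X j ω := by
      funext ω; simp
    have h1 : Integrable ((∏ j ∈ Finset.range n, X j) * X n) μ :=
      hind.integrable_mul (hpe ▸ ih.1) (hint n)
    have h2 := hind.integral_mul_eq_mul_integral (hpe ▸ ih.1).aestronglyMeasurable (hint n).aestronglyMeasurable
    constructor
    · have : ((∏ j ∈ Finset.range n, X j) * X n) =
        fun ω => ∏ j ∈ Finset.range (n + 1), X j ω := by
        funext ω; simp [Finset.prod_range_succ]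
      exact this ▸ h1
    · have h3 : ∫ ω, ((∏ j ∈ Finset.range n, X j) * X n) ω ∂μ
          = ∫ ω, ∏ j ∈ Finset.range (n + 1), X j ω ∂μ := by
        congr 1; funext ω; simp [Finset.prod_range_succ]
      rw [← h3, h2, hpe, ih.2, Finset.prod_range_succ]

/-- **Lemma 1 (unbiasedness).** Fix `p > 1` and let `f(a) = Σ γ_n aⁿ`.
Let `N` be geometric with parameter `p` (i.e. `P(N = n) = (p-1)/p^(n+1)`), let
`(X_j)` be i.i.d. real random variables independent of `N` with `E[X₁²] ≤ m`, and
suppose `f₊(√(p·m)) = Σ |γ_n| √(p·m)ⁿ < ∞`. Then the estimator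
`θ = γ_N · (p^(N+1)/(p-1)) · ∏_{j=1}^N X_j` is integrable and `E[θ] = f(E[X₁])`. -/
theorem unbiased_estimator_of_f_of_mean
    {Ω : Type*} [MeasurableSpace Ω] (μ : Measure Ω) [IsProbabilityMeasure μ]
    (p : ℝ) (hp : 1 < p)
    (f : ℝ → ℝ) (γ : ℕ → ℝ) (hf : ∀ a : ℝ, f a = ∑' n : ℕ, γ n * a ^ n)
    (N : Ω → ℕ) (hN : Measurable N)
    (hNdist : ∀ n : ℕ, μ {ω | N ω = n} = ENNReal.ofReal ((p - 1) / p ^ (n + 1)))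
    (X : ℕ → Ω → ℝ) (hXm : ∀ j, Measurable (X j))
    (hXindep : iIndepFun X μ)
    (hXid : ∀ j, μ.map (X j) = μ.map (X 0))
    (hNX : IndepFun N (fun ω => fun j => X j ω) μ)
    (m : ℝ) (hm : 0 ≤ m)
    (hXsq : Integrable (fun ω => (X 0 ω) ^ 2) μ)
    (hX2 : ∫ ω, (X 0 ω) ^ 2 ∂μ ≤ m)
    (hfplus : Summable (fun n : ℕ => |γ n| * Real.sqrt (p * m) ^ n)) :
    Integrable (fun ω =>
      γ (N ω) * (p ^ (N ω + 1) / (p - 1)) * ∏ j ∈ Finset.range (N ω), X j ω) μ ∧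
    ∫ ω, γ (N ω) * (p ^ (N ω + 1) / (p - 1)) * ∏ j ∈ Finset.range (N ω), X j ω ∂μ
      = f (∫ ω, X 0 ω ∂μ) := by
  have hp1 : (0:ℝ) < p - 1 := by linarith
  have hppos : (0:ℝ) < p := by linarith
  set a : ℝ := ∫ ω, X 0 ω ∂μ with ha
  -- basic integrability of X 0
  have hX0mem : MemLp (X 0) 2 μ :=
    (memLp_two_iff_integrable_sq (hXm 0).aestronglyMeasurable).2 hXsq
  have hX0int : Integrable (X 0) μ := hX0mem.integrable one_le_two
  set b : ℝ := ∫ ω, |X 0 ω| ∂μ with hb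
  have hb0 : 0 ≤ b := integral_nonneg fun ω => abs_nonneg _
  -- b ≤ √(p m)
  have hbm : b ≤ Real.sqrt (p * m) := by
    have habs : MemLp (fun ω => |X 0 ω|) 2 μ := hX0mem.abs
    have hv := variance_nonneg (fun ω => |X 0 ω|) μ
    rw [variance_eq_sub habs] at hv
    have hsq : (μ[(fun ω => |X 0 ω|) ^ 2] : ℝ) = ∫ ω, (X 0 ω) ^ 2 ∂μ := by
      congr 1; funext ω; simp [sq_abs]
    have hb2 : b ^ 2 ≤ p * m := by
      nlinarith [hv, hsq, hX2, hm, hp]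
    exact Real.le_sqrt_of_sq_le hb2
  -- identical distribution consequences
  have hXjint : ∀ j, Integrable (X j) μ := by
    intro j
    have h0 : Integrable id (μ.map (X 0)) :=
      (integrable_map_measure aestronglyMeasurable_id (hXm 0).aemeasurable).2 hX0int
    have h1 : Integrable id (μ.map (X j)) := by rw [hXid j]; exact h0
    exact (integrable_map_measure aestronglyMeasurable_id (hXm j).aemeasurable).1 h1
  have hXja : ∀ j, ∫ ω, X j ω ∂μ = a := by
    intro j
    calc ∫ ω, X j ω ∂μ = ∫ x, id x ∂(μ.map (X j)) :=
          (integral_map (hXm j).aemeasurable aestronglyMeasurable_id).symm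
      _ = ∫ x, id x ∂(μ.map (X 0)) := by rw [hXid j]
      _ = ∫ ω, X 0 ω ∂μ := integral_map (hXm 0).aemeasurable aestronglyMeasurable_id
  have hXjb : ∀ j, ∫ ω, |X j ω| ∂μ = b := by
    intro j
    calc ∫ ω, |X j ω| ∂μ = ∫ x, |x| ∂(μ.map (X j)) :=
          (integral_map (hXm j).aemeasurable measurable_abs.aestronglyMeasurable).symm
      _ = ∫ x, |x| ∂(μ.map (X 0)) := by rw [hXid j]
      _ = ∫ ω, |X 0 ω| ∂μ := integral_map (hXm 0).aemeasurable measurable_abs.aestronglyMeasurable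
  -- products
  set Y : ℕ → Ω → ℝ := fun j ω => |X j ω| with hY
  have hYm : ∀ j, Measurable (Y j) := fun j => (hXm j).abs
  have hYindep : iIndepFun Y μ :=
    hXindep.comp (fun _ (x : ℝ) => |x|) (fun _ => measurable_abs)
  have hYint : ∀ j, Integrable (Y j) μ := fun j => (hXjint j).abs
  have hPX := fun n => prod_indep_aux hXm hXindep hXjint n
  have hPY := fun n => prod_indep_aux hYm hYindep hYint n
  have hPXe : ∀ n, ∫ ω, ∏ j ∈ Finset.range n, X j ω ∂μ = a ^ n := by
    intro n
    rw [(hPX n).2]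
    rw [Finset.prod_congr rfl fun j _ => hXja j]
    simp
  have hPYe : ∀ n, ∫ ω, ∏ j ∈ Finset.range n, Y j ω ∂μ = b ^ n := by
    intro n
    rw [(hPY n).2]
    rw [Finset.prod_congr rfl fun j _ => hXjb j]
    simp
  -- the partition by values of N
  set S : ℕ → Set Ω := fun n => {ω | N ω = n} with hS
  have hSm : ∀ n, MeasurableSet (S n) := fun n => hN (measurableSet_singleton n)
  have hSd : Pairwise (Function.onFun Disjoint S) := by
    intro i j hij
    rw [Function.onFun, Set.disjoint_left]
    rintro ω hi hj
    exact hij (hi.symm.trans hj)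
  have hSu : (⋃ n, S n) = Set.univ := by
    ext ω; simp [hS]
  set c : ℕ → ℝ := fun n => γ n * (p ^ (n + 1) / (p - 1)) with hc
  have hqpos : ∀ n : ℕ, (0:ℝ) < p ^ (n + 1) / (p - 1) :=
    fun n => div_pos (pow_pos hppos _) hp1
  have hcabs : ∀ n, |c n| = |γ n| * (p ^ (n + 1) / (p - 1)) := by
    intro n
    rw [show c n = γ n * (p ^ (n + 1) / (p - 1)) from rfl, abs_mul,
      abs_of_pos (hqpos n)]
  set θ : Ω → ℝ := fun ω =>
    γ (N ω) * (p ^ (N ω + 1) / (p - 1)) * ∏ j ∈ Finset.range (N ω), X j ω with hθ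
  -- measurability of the estimator
  have hθm : Measurable θ := by
    have h1 : Measurable (fun ω => ((fun j => X j ω : ℕ → ℝ), N ω)) :=
      (measurable_pi_lambda _ hXm).prodMk hN
    have h2 : Measurable (fun q : (ℕ → ℝ) × ℕ =>
        γ q.2 * (p ^ (q.2 + 1) / (p - 1)) * ∏ j ∈ Finset.range q.2, q.1 j) := by
      apply measurable_from_prod_countable_left
      intro n
      dsimp only
      exact measurable_const.mul (Finset.measurable_prod _ fun j _ => measurable_pi_apply j)
    exact h2.comp h1
  -- independence of N and functionals of the X's
  have key : ∀ (n : ℕ) (ψ : (ℕ → ℝ) → ℝ), Measurable ψ →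
      Integrable (fun ω => ψ (fun j => X j ω)) μ →
      ∫ ω in S n, ψ (fun j => X j ω) ∂μ
        = ((p - 1) / p ^ (n + 1)) * ∫ ω, ψ (fun j => X j ω) ∂μ := by
    intro n ψ hψ hint
    have hφm : Measurable (fun k : ℕ => Set.indicator {n} (fun _ => (1:ℝ)) k) :=
      measurable_const.indicator (measurableSet_singleton n)
    have hind : IndepFun ((fun k : ℕ => Set.indicator {n} (fun _ => (1:ℝ)) k) ∘ N)
        (ψ ∘ fun ω => fun j => X j ω) μ := hNX.comp hφm hψ
    have hcompeq : ((fun k : ℕ => Set.indicator {n} (fun _ => (1:ℝ)) k) ∘ N)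
        = Set.indicator (S n) (fun _ => (1:ℝ)) := by
      funext ω
      simp only [Function.comp_apply, Set.indicator_apply, Set.mem_singleton_iff, hS,
        Set.mem_setOf_eq]
    rw [hcompeq] at hind
    have h1 : Integrable (Set.indicator (S n) fun _ => (1:ℝ)) μ :=
      (integrable_const 1).indicator (hSm n)
    have h2 := hind.integral_mul_eq_mul_integral h1.aestronglyMeasurable hint.aestronglyMeasurable
    have h3 : (Set.indicator (S n) (fun _ => (1:ℝ)) * (ψ ∘ fun ω => fun j => X j ω))
        = Set.indicator (S n) (fun ω => ψ (fun j => X j ω)) := by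
      funext ω
      by_cases h : ω ∈ S n <;> simp [Set.indicator, h]
    rw [h3] at h2
    have h4 : integral μ (Set.indicator (S n) (fun ω => ψ (fun j => X j ω)))
        = ∫ ω in S n, ψ (fun j => X j ω) ∂μ := integral_indicator (hSm n)
    have h5 : integral μ (Set.indicator (S n) (fun _ => (1:ℝ))) = (μ (S n)).toReal := by
      have := integral_indicator_one (μ := μ) (hSm n)
      simpa [Pi.one_def, Measure.real] using this
    rw [h4, h5] at h2
    have h6 : μ (S n) = ENNReal.ofReal ((p - 1) / p ^ (n + 1)) := hNdist n
    rw [h2, h6, ENNReal.toReal_ofReal (by positivity)]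
    rfl
  -- integrability pieces
  have hgint : ∀ n, Integrable (fun ω => c n * ∏ j ∈ Finset.range n, X j ω) μ :=
    fun n => ((hPX n).1).const_mul (c n)
  have hGint : ∀ n, Integrable (fun ω => |c n| * ∏ j ∈ Finset.range n, Y j ω) μ :=
    fun n => ((hPY n).1).const_mul _
  -- set integrals of θ
  have hθset : ∀ n, ∫ ω in S n, θ ω ∂μ = γ n * a ^ n := by
    intro n
    have hcong : ∫ ω in S n, θ ω ∂μ
        = ∫ ω in S n, c n * ∏ j ∈ Finset.range n, X j ω ∂μ := by
      apply setIntegral_congr_fun (hSm n)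
      intro ω hω
      have hn : N ω = n := hω
      simp [hθ, hc, hn]
    have hk := key n (fun v => c n * ∏ j ∈ Finset.range n, v j)
      (measurable_const.mul (Finset.measurable_prod _ fun j _ => measurable_pi_apply j))
      (hgint n)
    rw [hcong, hk, integral_const_mul, hPXe n, hc]
    have hpn : (p : ℝ) ^ (n + 1) ≠ 0 := by positivity
    field_simp
  -- lintegrals of ‖θ‖ on the pieces
  have hθnorm : ∀ n, ∫⁻ ω in S n, ‖θ ω‖₊ ∂μ = ENNReal.ofReal (|γ n| * b ^ n) := by
    intro n
    have hcong : ∫⁻ ω in S n, ‖θ ω‖₊ ∂μ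
        = ∫⁻ ω in S n, ENNReal.ofReal (|c n| * ∏ j ∈ Finset.range n, Y j ω) ∂μ := by
      apply setLIntegral_congr_fun (hSm n)
      intro ω hω
      have hn : N ω = n := hω
      beta_reduce
      rw [← enorm_eq_nnnorm, ← ofReal_norm]
      congr 1
      rw [Real.norm_eq_abs, hθ]
      simp only [hn, hY]
      rw [abs_mul, Finset.abs_prod]
    have hnn : 0 ≤ᵐ[μ.restrict (S n)]
        fun ω => |c n| * ∏ j ∈ Finset.range n, Y j ω := by
      apply Filter.Eventually.of_forall
      intro ω
      have : ∀ j ∈ Finset.range n, (0:ℝ) ≤ Y j ω := fun j _ => abs_nonneg _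
      positivity
    rw [hcong, ← ofReal_integral_eq_lintegral_ofReal ((hGint n).restrict) hnn]
    have hk := key n (fun v => |c n| * ∏ j ∈ Finset.range n, |v j|)
      (measurable_const.mul (Finset.measurable_prod _ fun j _ =>
        (measurable_pi_apply j).abs))
      (hGint n)
    rw [hk, integral_const_mul, hPYe n]
    congr 1
    rw [hcabs n]
    have hpn : (p : ℝ) ^ (n + 1) ≠ 0 := by positivity
    field_simp
  -- summability of the norms
  have hsummb : Summable (fun n => |γ n| * b ^ n) := by
    refine Summable.of_nonneg_of_le (fun n => by positivity) (fun n => ?_) hfplus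
    exact mul_le_mul_of_nonneg_left (pow_le_pow_left₀ hb0 hbm n) (abs_nonneg _)
  -- integrability of θ
  have hθint : Integrable θ μ := by
    refine ⟨hθm.aestronglyMeasurable, ?_⟩
    show (∫⁻ ω, ‖θ ω‖₊ ∂μ) < ⊤
    have hdecomp : ∫⁻ ω, ‖θ ω‖₊ ∂μ = ∑' n, ∫⁻ ω in S n, ‖θ ω‖₊ ∂μ := by
      rw [← lintegral_iUnion hSm hSd, hSu, setLIntegral_univ]
    rw [hdecomp]
    have : ∀ n, ∫⁻ ω in S n, ‖θ ω‖₊ ∂μ = ENNReal.ofReal (|γ n| * b ^ n) := hθnorm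
    rw [tsum_congr this, ← ENNReal.ofReal_tsum_of_nonneg (fun n => by positivity) hsummb]
    exact ENNReal.ofReal_lt_top
  refine ⟨hθint, ?_⟩
  -- the value of the integral
  have hhs : HasSum (fun n => ∫ ω in S n, θ ω ∂μ) (∫ ω, θ ω ∂μ) := by
    have h := hasSum_integral_iUnion hSm hSd (hθint.integrableOn)
    rwa [hSu, setIntegral_univ] at h
  have hhs2 : HasSum (fun n => γ n * a ^ n) (∫ ω, θ ω ∂μ) := by
    have := funext hθset
    rwa [this] at hhs
  rw [hf a]
  exact hhs2.tsum_eq.symm
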